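/- For every natural number m, the set of values r(S) over all LR-strings S of length m equals the set of fractions (2k−1)/2^m for 1 ≤ k ≤ 2^m. -/

import Mathlib

open List

/-- `r`-value of an LR-string (`true` = R, `false` = L):
`r(ε) = 1`, `r(SL) = r(S) - 2^(-|SL|)`, `r(SR) = r(S) + 2^(-|SR|)`. -/
def rval (S : List Bool) : ℚ :=
  1 + ∑ i ∈ Finset.range S.length,
      (if S.getD i false then ((2:ℚ)^(i+1))⁻¹ else -((2:ℚ)^(i+1))⁻¹)

/-- Generalized strings: LR-strings plus the formal symbols `R⁻¹ = inv true`
and `L⁻¹ = inv false`. -/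
inductive Gen where
  | inv : Bool → Gen
  | str : List Bool → Gen
deriving DecidableEq

/-- Left parent: `P_L(ε) = R⁻¹`, `P_L(SL) = P_L(S)`, `P_L(SR) = S`. -/
def PL (S : List Bool) : Gen :=
  match S.reverse.dropWhile (· = false) with
  | [] => Gen.inv true
  | _ :: t => Gen.str t.reverse

/-- Right parent: `P_R(ε) = L⁻¹`, `P_R(SL) = S`, `P_R(SR) = P_R(S)`. -/
def PR (S : List Bool) : Gen :=
  match S.reverse.dropWhile (· = true) with
  | [] => Gen.inv false
  | _ :: t => Gen.str t.reverse

/-- Extension of `r` to generalized strings: `r(R⁻¹) = 0`, `r(L⁻¹) = 2`. -/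
def rg : Gen → ℚ
  | Gen.inv true => 0
  | Gen.inv false => 2
  | Gen.str S => rval S

/-- Length of a generalized string; the formal symbols have length `-1`. -/
def glen : Gen → ℤ
  | Gen.inv _ => -1
  | Gen.str S => S.length

/-- Position function: `N(ε) = 0`, `N(SL) = 2N(S)+1`, `N(SR) = 2N(S)+2`. -/
def posN (S : List Bool) : ℕ :=
  ∑ i ∈ Finset.range S.length, (if S.getD i false then 2 else 1) * 2^(S.length - 1 - i)

/-- The alternating-block string `S(k₀,…,k_m) = R^{k₀} L^{k₁} R^{k₂} ⋯`. -/
def blockStr (ks : List ℕ) : List Bool :=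
  (ks.zipIdx.map (fun p => List.replicate p.1 (decide (p.2 % 2 = 0)))).flatten

/-- Continued fraction `[q₀,…,q_m]`. -/
def cf : List ℚ → ℚ
  | [] => 0
  | [q] => q
  | q :: qs => q + (cf qs)⁻¹

/-- Admissible continued-fraction index sequences: `[q₀]` with `q₀ ≥ 1`, or
`[q₀,…,q_m]` with `m ≥ 1`, intermediate `qᵢ ≥ 1`, and `q_m ≥ 2`. -/
def CFAdmissible (qs : List ℕ) : Prop :=
  qs ≠ [] ∧ (qs.length = 1 → 1 ≤ qs.getD 0 0) ∧
    (∀ i, 1 ≤ i → i + 1 < qs.length → 1 ≤ qs.getD i 0) ∧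
    (2 ≤ qs.length → 2 ≤ qs.getLastD 0)

/-- The map `f([q₀,…,q_m]) = S(q₀,…,q_{m-1},q_m - 1)`. -/
def cfToStr (qs : List ℕ) : List Bool :=
  blockStr (qs.dropLast ++ [qs.getLastD 0 - 1])

lemma rval_cons (b : Bool) (S : List Bool) :
    rval (b :: S) = (if b then 1 else 0) + rval S / 2 := by
  unfold rval
  rw [List.length_cons, Finset.sum_range_succ']
  simp only [List.getD_cons_succ, List.getD_cons_zero]
  have : ∀ i : ℕ, (if S.getD i false then ((2:ℚ)^(i+1+1))⁻¹ else -((2:ℚ)^(i+1+1))⁻¹)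
      = (if S.getD i false then ((2:ℚ)^(i+1))⁻¹ else -((2:ℚ)^(i+1))⁻¹) / 2 := by
    intro i; split <;> ring
  rw [Finset.sum_congr rfl (fun i _ => this i), ← Finset.sum_div]
  cases b <;> simp <;> ring

/-- Theorem 2.2(a): the `r`-values of strings of length `m` are exactly the
fractions `(2k-1)/2^m` for `1 ≤ k ≤ 2^m`. -/
theorem stmt0 (m : ℕ) :
    {x : ℚ | ∃ S : List Bool, S.length = m ∧ rval S = x} =
      {x : ℚ | ∃ k : ℕ, 1 ≤ k ∧ k ≤ 2 ^ m ∧ x = (2 * (k : ℚ) - 1) / 2 ^ m} := by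
  induction m with
  | zero =>
    ext x
    simp only [Set.mem_setOf_eq, pow_zero]
    constructor
    · rintro ⟨S, hS, hr⟩
      rw [List.length_eq_zero_iff] at hS
      subst hS
      exact ⟨1, le_refl 1, le_refl 1, by simp [rval] at hr; simp [← hr]; norm_num⟩
    · rintro ⟨k, h1, h2, hx⟩
      interval_cases k
      exact ⟨[], rfl, by simp [rval, hx]; norm_num⟩
  | succ m ih =>
    have h2 : (2:ℚ)^m ≠ 0 := by positivity
    ext x
    simp only [Set.mem_setOf_eq]
    constructor
    · rintro ⟨S, hS, hr⟩
      cases S with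
      | nil => simp at hS
      | cons b T =>
        simp only [List.length_cons, Nat.succ_inj] at hS
        have hmem : rval T ∈ {x : ℚ | ∃ S : List Bool, S.length = m ∧ rval S = x} :=
          ⟨T, hS, rfl⟩
        rw [ih] at hmem
        obtain ⟨j, hj1, hj2, hjx⟩ := hmem
        rw [rval_cons, hjx] at hr
        cases b with
        | false =>
          refine ⟨j, hj1, le_trans hj2 (by norm_num [pow_succ]), ?_⟩
          rw [← hr]; rw [pow_succ]; field_simp; simp only [if_true, if_false, Bool.false_eq_true]; ring
        | true =>
          refine ⟨j + 2^m, le_trans hj1 (Nat.le_add_right _ _), ?_, ?_⟩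
          · rw [pow_succ]; omega
          · rw [← hr]; push_cast; rw [pow_succ]; field_simp; simp only [if_true, if_false, Bool.false_eq_true]; ring
    · rintro ⟨k, h1, h2k, hx⟩
      by_cases hle : k ≤ 2^m
      · have hmem : ((2 * (k:ℚ) - 1) / 2^m) ∈
            {x : ℚ | ∃ S : List Bool, S.length = m ∧ rval S = x} := by
          rw [ih]; exact ⟨k, h1, hle, rfl⟩
        obtain ⟨T, hT, hrT⟩ := hmem
        refine ⟨false :: T, by simp [hT], ?_⟩
        rw [rval_cons, hrT, hx]; rw [pow_succ]; field_simp; simp only [if_true, if_false, Bool.false_eq_true]; ring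
      · push_neg at hle
        have hj1 : 1 ≤ k - 2^m := by omega
        have hj2 : k - 2^m ≤ 2^m := by rw [pow_succ] at h2k; omega
        have hmem : ((2 * ((k - 2^m : ℕ):ℚ) - 1) / 2^m) ∈
            {x : ℚ | ∃ S : List Bool, S.length = m ∧ rval S = x} := by
          rw [ih]; exact ⟨k - 2^m, hj1, hj2, rfl⟩
        obtain ⟨T, hT, hrT⟩ := hmem
        refine ⟨true :: T, by simp [hT], ?_⟩
        rw [rval_cons, hrT, hx]
        have : ((k - 2^m : ℕ):ℚ) = (k:ℚ) - 2^m := by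
          push_cast [Nat.cast_sub hle.le]; ring
        rw [this, pow_succ]; field_simp; simp only [if_true, if_false, Bool.false_eq_true]; ring
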